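/- Let U ⊆ ℝ² be open, let Q, S, B : U → ℝ be differentiable functions with D := Q·B − S² nowhere zero on U, and suppose that S·Q_ϑ + B·Q_λ = Q·S_ϑ + S·S_λ and S·S_ϑ + B·S_λ = Q·B_ϑ + S·B_λ hold at every point of U, where f_ϑ and f_λ denote the partial derivatives of f with respect to the first and second coordinate. Then (B/D)_λ + (S/D)_ϑ = 0 and (S/D)_λ + (Q/D)_ϑ = 0 at every point of U; that is, the 1-forms D⁻¹(B dϑ − S dλ) and D⁻¹(S dϑ − Q dλ) are closed. -/

import Mathlib

lemma fdiv_apply {E : Type*} [NormedAddCommGroup E] [NormedSpace ℝ E]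
    (f g : E → ℝ) (x : E) (v : E) (hf : DifferentiableAt ℝ f x)
    (hg : DifferentiableAt ℝ g x) (hx : g x ≠ 0) :
    fderiv ℝ (fun y => f y / g y) x v =
      (fderiv ℝ f x v * g x - f x * fderiv ℝ g x v) / g x ^ 2 := by
  have hinv : HasFDerivAt (fun y => (g y)⁻¹)
      ((-((g x ^ 2)⁻¹)) • fderiv ℝ g x) x := by
    have h := (hasFDerivAt_inv' (𝕜 := ℝ) hx).comp x hg.hasFDerivAt
    refine h.congr_fderiv ?_
    ext w
    simp [ContinuousLinearMap.comp_apply, mul_comm, pow_two, mul_inv]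
    ring
  have hmul := (hf.hasFDerivAt.mul hinv).fderiv
  have heq : (fun y => f y / g y) = fun y => f y * (g y)⁻¹ := by
    funext y; rw [div_eq_mul_inv]
  rw [heq, show (fun y => f y * (g y)⁻¹) = (f * fun y => (g y)⁻¹) from rfl, hmul]
  simp only [ContinuousLinearMap.add_apply, ContinuousLinearMap.smul_apply, smul_eq_mul]
  field_simp
  ring

/-- Claim (d) of Section 4 of the paper: the integrability system (eqv)
implies closedness of the 1-forms D⁻¹(B dϑ − S dλ) and D⁻¹(S dϑ − Q dλ),
i.e. the vanishing of (B/D)_λ + (S/D)_ϑ and (S/D)_λ + (Q/D)_ϑ. Partial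
derivatives in the first coordinate (ϑ) and second coordinate (λ) are
encoded as `fderiv ℝ f p (1, 0)` and `fderiv ℝ f p (0, 1)`. -/
theorem stmt_14 (U : Set (ℝ × ℝ)) (hU : IsOpen U)
    (Q S B : ℝ × ℝ → ℝ)
    (hQ : ∀ p ∈ U, DifferentiableAt ℝ Q p)
    (hS : ∀ p ∈ U, DifferentiableAt ℝ S p)
    (hB : ∀ p ∈ U, DifferentiableAt ℝ B p)
    (D : ℝ × ℝ → ℝ) (hD : D = fun p => Q p * B p - (S p) ^ 2)
    (hD0 : ∀ p ∈ U, D p ≠ 0)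
    (heqv1 : ∀ p ∈ U,
      S p * fderiv ℝ Q p (1, 0) + B p * fderiv ℝ Q p (0, 1) =
        Q p * fderiv ℝ S p (1, 0) + S p * fderiv ℝ S p (0, 1))
    (heqv2 : ∀ p ∈ U,
      S p * fderiv ℝ S p (1, 0) + B p * fderiv ℝ S p (0, 1) =
        Q p * fderiv ℝ B p (1, 0) + S p * fderiv ℝ B p (0, 1)) :
    ∀ p ∈ U,
      fderiv ℝ (fun q => B q / D q) p (0, 1) +
        fderiv ℝ (fun q => S q / D q) p (1, 0) = 0 ∧
      fderiv ℝ (fun q => S q / D q) p (0, 1) +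
        fderiv ℝ (fun q => Q q / D q) p (1, 0) = 0 := by
  intro p hp
  have hQp := hQ p hp
  have hSp := hS p hp
  have hBp := hB p hp
  have hDp : DifferentiableAt ℝ D p := by
    rw [hD]; exact (hQp.mul hBp).sub (hSp.pow 2)
  have hD0p := hD0 p hp
  -- derivative of D
  have hDder : HasFDerivAt D
      ((B p • fderiv ℝ Q p + Q p • fderiv ℝ B p) - (2 * S p) • fderiv ℝ S p) p := by
    rw [hD]
    have h1 : HasFDerivAt (fun q => Q q * B q)
        (Q p • fderiv ℝ B p + B p • fderiv ℝ Q p) p :=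
      hQp.hasFDerivAt.mul hBp.hasFDerivAt
    have h2 : HasFDerivAt (fun q => (S q) ^ 2)
        ((2 * S p) • fderiv ℝ S p) p := by
      have := hSp.hasFDerivAt.mul hSp.hasFDerivAt
      have heq : (fun q => (S q) ^ 2) = fun q => S q * S q := by
        funext q; ring
      rw [heq]
      refine this.congr_fderiv ?_
      ext w <;> simp only [ContinuousLinearMap.coe_comp', Function.comp_apply, ContinuousLinearMap.inl_apply, ContinuousLinearMap.inr_apply, ContinuousLinearMap.add_apply, ContinuousLinearMap.coe_smul', Pi.smul_apply, ContinuousLinearMap.sub_apply, smul_eq_mul] <;> ring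
    refine (h1.sub h2).congr_fderiv ?_
    ext w <;> simp only [ContinuousLinearMap.coe_comp', Function.comp_apply, ContinuousLinearMap.inl_apply, ContinuousLinearMap.inr_apply, ContinuousLinearMap.add_apply, ContinuousLinearMap.coe_smul', Pi.smul_apply, ContinuousLinearMap.sub_apply, smul_eq_mul] <;> ring
  have hDv : ∀ v : ℝ × ℝ, fderiv ℝ D p v =
      B p * fderiv ℝ Q p v + Q p * fderiv ℝ B p v - 2 * S p * fderiv ℝ S p v := by
    intro v
    rw [hDder.fderiv]
    simp [smul_eq_mul]
  have e1 := heqv1 p hp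
  have e2 := heqv2 p hp
  have hDexp : D p = Q p * B p - S p ^ 2 := by rw [hD]
  constructor
  · rw [fdiv_apply B D p _ hBp hDp hD0p, fdiv_apply S D p _ hSp hDp hD0p,
      ← add_div, div_eq_zero_iff]
    left
    rw [hDv, hDv]
    linear_combination (-B p * e1 + S p * e2) + (fderiv ℝ B p (0,1)
      + fderiv ℝ S p (1,0)) * hDexp
  · rw [fdiv_apply S D p _ hSp hDp hD0p, fdiv_apply Q D p _ hQp hDp hD0p,
      ← add_div, div_eq_zero_iff]
    left
    rw [hDv, hDv]
    linear_combination (-S p * e1 + Q p * e2) + (fderiv ℝ S p (0,1)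
      + fderiv ℝ Q p (1,0)) * hDexp
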